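/- Suppose ∑_{λ∈Λ} |f(λ)|² ≤ C|Ω|·‖f‖² for all f ∈ PW_Ω, where C > 0, Ω ⊂ ℝ has finite positive measure, and Λ ⊂ ℝ. Then there exists η > 0, depending only on Ω, such that #(Λ ∩ I) ≤ 9C for every interval I ⊂ ℝ of length η. -/

import Mathlib

open MeasureTheory ENNReal Filter

/-- The (inverse) Fourier transform with the paper's normalization:
`f(x) = (2π)^{-1/2} ∫ e^{-itx} F(t) dt`. -/
noncomputable def FT (F : ℝ → ℂ) (x : ℝ) : ℂ :=
  (Real.sqrt (2 * Real.pi) : ℂ)⁻¹ * ∫ t : ℝ, Complex.exp (-(Complex.I * t * x)) * F t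

/-- `f` belongs to the Paley–Wiener space `PW_Ω`: it is the Fourier transform of an
`L²` function `F` vanishing outside `Ω` (such `F` is automatically integrable when
`Ω` has finite measure, so `f` is continuous and pointwise evaluation makes sense). -/
def IsPW (Ω : Set ℝ) (f : ℝ → ℂ) : Prop :=
  ∃ F : ℝ → ℂ, MemLp F 2 volume ∧ (∀ t ∉ Ω, F t = 0) ∧ Integrable F volume ∧
    ∀ x, f x = FT F x

/-- `Λ ⊆ ℝ` has separation constant at least `δ`. -/
def Separated (δ : ℝ) (Λ : Set ℝ) : Prop :=
  ∀ x ∈ Λ, ∀ y ∈ Λ, x ≠ y → δ ≤ |x - y|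

namespace Stmt12Aux

open Complex Set

/-- The complex-valued indicator of `Ω`. -/
noncomputable def ind (Ω : Set ℝ) : ℝ → ℂ := Ω.indicator 1

/-- The (unnormalized) Fourier transform of the indicator. -/
noncomputable def Hf (Ω : Set ℝ) (x : ℝ) : ℂ :=
  ∫ t : ℝ, Complex.exp (-(Complex.I * t * x)) * ind Ω t

variable {Ω : Set ℝ}

lemma ind_eq_ofReal (t : ℝ) :
    ind Ω t = ((Ω.indicator (fun _ => (1:ℝ)) t : ℝ) : ℂ) := by
  by_cases h : t ∈ Ω <;> simp [ind, h]

lemma conj_ind (t : ℝ) : (starRingEnd ℂ) (ind Ω t) = ind Ω t := by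
  by_cases h : t ∈ Ω <;> simp [ind, h]

lemma norm_ind (t : ℝ) : ‖ind Ω t‖ = Ω.indicator (fun _ => (1:ℝ)) t := by
  by_cases h : t ∈ Ω <;> simp [ind, h]

lemma norm_ind_le (t : ℝ) : ‖ind Ω t‖ ≤ 1 := by
  by_cases h : t ∈ Ω <;> simp [ind, h]

lemma measurable_ind (hmeas : MeasurableSet Ω) : Measurable (ind Ω) :=
  measurable_one.indicator hmeas

lemma ind_integrable (hmeas : MeasurableSet Ω) (hfin : volume Ω < ⊤) :
    Integrable (ind Ω) := by
  rw [ind, integrable_indicator_iff hmeas]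
  exact integrableOn_const hfin.ne

lemma norm_exp_neg (t x : ℝ) : ‖Complex.exp (-(Complex.I * t * x))‖ = 1 := by
  rw [Complex.norm_exp]
  simp

lemma norm_exp_pos' (t x : ℝ) : ‖Complex.exp (Complex.I * t * x)‖ = 1 := by
  rw [Complex.norm_exp]
  simp

lemma meas_phase_neg (x : ℝ) :
    Measurable fun t : ℝ => Complex.exp (-(Complex.I * t * x)) :=
  Complex.measurable_exp.comp
    (((measurable_const.mul Complex.measurable_ofReal).mul measurable_const).neg)

lemma meas_phase_pos (x : ℝ) :
    Measurable fun t : ℝ => Complex.exp (Complex.I * t * x) :=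
  Complex.measurable_exp.comp
    ((measurable_const.mul Complex.measurable_ofReal).mul measurable_const)

lemma Hf_continuous (hmeas : MeasurableSet Ω) (hfin : volume Ω < ⊤) :
    Continuous (Hf Ω) := by
  apply continuous_of_dominated (bound := fun t => ‖ind Ω t‖)
  · intro x
    exact ((meas_phase_neg x).mul (measurable_ind hmeas)).aestronglyMeasurable
  · intro x
    filter_upwards with t
    rw [norm_mul, norm_exp_neg, one_mul]
  · exact (ind_integrable hmeas hfin).norm
  · filter_upwards with t
    have : Continuous fun x : ℝ => Complex.exp (-(Complex.I * t * x)) :=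
      Complex.continuous_exp.comp ((continuous_const.mul Complex.continuous_ofReal).neg)
    exact this.mul continuous_const

lemma Hf_zero (hmeas : MeasurableSet Ω) : Hf Ω 0 = ((volume Ω).toReal : ℂ) := by
  have : ∀ t : ℝ, Complex.exp (-(Complex.I * t * (0:ℝ))) * ind Ω t = ind Ω t := by
    intro t; simp
  rw [Hf]
  simp only [this]
  rw [ind, show (1 : ℝ → ℂ) = fun _ => (1:ℂ) from rfl, integral_indicator_const (1:ℂ) hmeas]
  simp [Measure.real]

lemma Hf_norm_le (hmeas : MeasurableSet Ω) (x : ℝ) :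
    ‖Hf Ω x‖ ≤ (volume Ω).toReal := by
  calc ‖Hf Ω x‖ ≤ ∫ t : ℝ, ‖Complex.exp (-(Complex.I * t * x)) * ind Ω t‖ :=
        norm_integral_le_integral_norm _
    _ = ∫ t : ℝ, Ω.indicator (fun _ => (1:ℝ)) t := by
        congr 1; funext t; rw [norm_mul, norm_exp_neg, one_mul, norm_ind]
    _ = (volume Ω).toReal := by
        rw [integral_indicator_const (1:ℝ) hmeas]; simp [Measure.real]

end Stmt12Aux
namespace Stmt12Aux
open Complex Set
variable {Ω : Set ℝ}

lemma gauss_val {b : ℝ} (hb : 0 < b) :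
    ∫ u : ℝ, Real.sqrt (Real.pi / b) * Real.exp (-u ^ 2 / (4 * b)) = 2 * Real.pi := by
  have h4b : 0 < 1 / (4 * b) := by positivity
  have : (fun u : ℝ => Real.exp (-u ^ 2 / (4 * b))) =
      fun u : ℝ => Real.exp (-(1/(4*b)) * u ^ 2) := by
    funext u; congr 1; field_simp
  rw [integral_const_mul, this, integral_gaussian]
  rw [show Real.pi / (1 / (4 * b)) = Real.pi * (4 * b) by field_simp]
  rw [← Real.sqrt_mul (by positivity)]
  rw [show Real.pi / b * (Real.pi * (4 * b)) = (2 * Real.pi) ^ 2 by field_simp; ring]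
  exact Real.sqrt_sq (by positivity)

lemma gauss_integrable {b : ℝ} (hb : 0 < b) :
    Integrable (fun u : ℝ => Real.sqrt (Real.pi / b) * Real.exp (-u ^ 2 / (4 * b))) := by
  have h4b : 0 < 1 / (4 * b) := by positivity
  have : (fun u : ℝ => Real.sqrt (Real.pi / b) * Real.exp (-u ^ 2 / (4 * b))) =
      fun u : ℝ => Real.sqrt (Real.pi / b) * Real.exp (-(1/(4*b)) * u ^ 2) := by
    funext u; congr 2; field_simp
  rw [this]
  exact (integrable_exp_neg_mul_sq h4b).const_mul _

lemma key (hmeas : MeasurableSet Ω) (hfin : volume Ω < ⊤) {b : ℝ} (hb : 0 < b) :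
    ∫ x : ℝ, Real.exp (-b * x ^ 2) * ‖Hf Ω x‖ ^ 2 ≤
      2 * Real.pi * (volume Ω).toReal := by
  set g : ℝ → ℝ := fun u => Real.sqrt (Real.pi / b) * Real.exp (-u ^ 2 / (4 * b)) with hg
  have hg0 : ∀ u, 0 ≤ g u := fun u => by positivity
  set Q : ℝ → ℝ × ℝ → ℂ := fun x z =>
    (Real.exp (-b * x ^ 2) : ℂ) *
      ((Complex.exp (-(Complex.I * z.1 * x)) * ind Ω z.1) *
        (Complex.exp (Complex.I * z.2 * x) * ind Ω z.2)) with hQ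
  -- pointwise product formula
  have prodform : ∀ x : ℝ,
      (Real.exp (-b * x ^ 2) : ℂ) * (Hf Ω x * (starRingEnd ℂ) (Hf Ω x)) =
        ∫ z : ℝ × ℝ, Q x z ∂(volume.prod volume) := by
    intro x
    have hconj : (starRingEnd ℂ) (Hf Ω x) =
        ∫ s : ℝ, Complex.exp (Complex.I * s * x) * ind Ω s := by
      rw [Hf, ← integral_conj]
      congr 1; funext s
      rw [map_mul, conj_ind, ← Complex.exp_conj]
      congr 2
      simp
    rw [hconj, Hf, ← integral_prod_mul, ← integral_const_mul]
  -- integrability for Fubini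
  have hQint : Integrable (Function.uncurry Q) (volume.prod (volume.prod volume)) := by
    have hmaj : Integrable (fun p : ℝ × ℝ × ℝ =>
        Real.exp (-b * p.1 ^ 2) * (‖ind Ω p.2.1‖ * ‖ind Ω p.2.2‖))
        (volume.prod (volume.prod volume)) :=
      (integrable_exp_neg_mul_sq hb).mul_prod
        ((ind_integrable hmeas hfin).norm.mul_prod (ind_integrable hmeas hfin).norm)
    apply hmaj.mono'
    · apply Measurable.aestronglyMeasurable
      apply Measurable.mul
      · exact Complex.measurable_ofReal.comp
          (Real.measurable_exp.comp ((measurable_fst.pow_const 2).const_mul (-b)))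
      · apply Measurable.mul
        · exact (Complex.measurable_exp.comp
            (((measurable_const.mul (Complex.measurable_ofReal.comp
              (measurable_fst.comp measurable_snd))).mul
              (Complex.measurable_ofReal.comp measurable_fst)).neg)).mul
            ((measurable_ind hmeas).comp (measurable_fst.comp measurable_snd))
        · exact (Complex.measurable_exp.comp
            ((measurable_const.mul (Complex.measurable_ofReal.comp
              (measurable_snd.comp measurable_snd))).mul
              (Complex.measurable_ofReal.comp measurable_fst))).mul
            ((measurable_ind hmeas).comp (measurable_snd.comp measurable_snd))
    · filter_upwards with p
      rw [Function.uncurry]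
      simp only [hQ]
      rw [norm_mul, norm_mul, norm_mul, norm_mul, norm_exp_neg, norm_exp_pos',
        one_mul, one_mul]
      rw [Complex.norm_real, Real.norm_eq_abs, abs_of_pos (Real.exp_pos _)]
  -- inner integral via the Gaussian Fourier transform
  have inner_eq : ∀ z : ℝ × ℝ,
      (∫ x : ℝ, Q x z) = ind Ω z.1 * ind Ω z.2 * (g (z.2 - z.1) : ℂ) := by
    rintro ⟨t, s⟩
    have h1 : ∀ x : ℝ, Q x (t, s) = (ind Ω t * ind Ω s) *
        (Complex.exp (Complex.I * ((s:ℂ) - (t:ℂ)) * x) * Complex.exp (-(b:ℂ) * (x:ℂ) ^ 2)) := by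
      intro x
      have e1 : Complex.exp (-(Complex.I * t * x)) * Complex.exp (Complex.I * s * x) =
          Complex.exp (Complex.I * ((s:ℂ) - (t:ℂ)) * x) := by
        rw [← Complex.exp_add]; congr 1; ring
      have e2 : (Real.exp (-b * x ^ 2) : ℂ) = Complex.exp (-(b:ℂ) * (x:ℂ) ^ 2) := by
        rw [Complex.ofReal_exp]; congr 1; push_cast; ring
      calc Q x (t, s)
          = (ind Ω t * ind Ω s) * ((Complex.exp (-(Complex.I * t * x)) *
              Complex.exp (Complex.I * s * x)) * (Real.exp (-b * x ^ 2) : ℂ)) := by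
            rw [hQ]; ring
        _ = _ := by rw [e1, e2]
    simp only [h1]
    rw [integral_const_mul, fourierIntegral_gaussian (by simp [hb]) ((s:ℂ) - (t:ℂ))]
    congr 1
    have e2 : ((Real.pi : ℂ) / (b : ℂ)) = ((Real.pi / b : ℝ) : ℂ) := by push_cast; ring
    have e3 : ((Real.pi / b : ℝ) : ℂ) ^ (1/2 : ℂ) = ((Real.sqrt (Real.pi / b) : ℝ) : ℂ) := by
      rw [Real.sqrt_eq_rpow, Complex.ofReal_cpow (by positivity)]
      norm_num
    have e4 : -((s:ℂ) - (t:ℂ)) ^ 2 / (4 * (b:ℂ)) = ((-(s - t) ^ 2 / (4 * b) : ℝ) : ℂ) := by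
      push_cast; ring
    rw [e2, e3, e4, ← Complex.ofReal_exp, ← Complex.ofReal_mul, hg]
  -- identify the weighted integral with a double integral
  have hreal : ((∫ x : ℝ, Real.exp (-b * x ^ 2) * ‖Hf Ω x‖ ^ 2 : ℝ) : ℂ) =
      ((∫ z : ℝ × ℝ, Ω.indicator (fun _ => (1:ℝ)) z.1 * Ω.indicator (fun _ => (1:ℝ)) z.2 *
        g (z.2 - z.1) ∂(volume.prod volume) : ℝ) : ℂ) := by
    have A : ((∫ x : ℝ, Real.exp (-b * x ^ 2) * ‖Hf Ω x‖ ^ 2 : ℝ) : ℂ) =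
        ∫ x : ℝ, ((Real.exp (-b * x ^ 2) * ‖Hf Ω x‖ ^ 2 : ℝ) : ℂ) := integral_ofReal.symm
    have B : ((∫ z : ℝ × ℝ, Ω.indicator (fun _ => (1:ℝ)) z.1 * Ω.indicator (fun _ => (1:ℝ)) z.2 *
        g (z.2 - z.1) ∂(volume.prod volume) : ℝ) : ℂ) =
        ∫ z : ℝ × ℝ, ((Ω.indicator (fun _ => (1:ℝ)) z.1 * Ω.indicator (fun _ => (1:ℝ)) z.2 *
        g (z.2 - z.1) : ℝ) : ℂ) ∂(volume.prod volume) := integral_ofReal.symm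
    rw [A, B]
    have lhs_eq : ∀ x : ℝ, ((Real.exp (-b * x ^ 2) * ‖Hf Ω x‖ ^ 2 : ℝ) : ℂ) =
        (Real.exp (-b * x ^ 2) : ℂ) * (Hf Ω x * (starRingEnd ℂ) (Hf Ω x)) := by
      intro x
      rw [Complex.mul_conj, Complex.normSq_eq_norm_sq]
      push_cast; ring
    have rhs_eq : ∀ z : ℝ × ℝ,
        ((Ω.indicator (fun _ => (1:ℝ)) z.1 * Ω.indicator (fun _ => (1:ℝ)) z.2 *
          g (z.2 - z.1) : ℝ) : ℂ) = ind Ω z.1 * ind Ω z.2 * (g (z.2 - z.1) : ℂ) := by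
      intro z
      rw [ind_eq_ofReal, ind_eq_ofReal]; push_cast; ring
    simp only [lhs_eq, rhs_eq, prodform]
    rw [integral_integral_swap hQint]
    simp only [inner_eq]
  have hreal' : (∫ x : ℝ, Real.exp (-b * x ^ 2) * ‖Hf Ω x‖ ^ 2 : ℝ) =
      ∫ z : ℝ × ℝ, Ω.indicator (fun _ => (1:ℝ)) z.1 * Ω.indicator (fun _ => (1:ℝ)) z.2 *
        g (z.2 - z.1) ∂(volume.prod volume) := by
    exact_mod_cast hreal
  rw [hreal']
  -- now bound the double integral
  set r : ℝ × ℝ → ℝ := fun z => Ω.indicator (fun _ => (1:ℝ)) z.1 *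
      Ω.indicator (fun _ => (1:ℝ)) z.2 * g (z.2 - z.1) with hr
  have hindR : Measurable (Ω.indicator (fun _ => (1:ℝ))) := measurable_const.indicator hmeas
  have hindR0 : ∀ t, 0 ≤ Ω.indicator (fun _ => (1:ℝ)) t :=
    Set.indicator_nonneg (fun _ _ => zero_le_one)
  have hindR1 : ∀ t, Ω.indicator (fun _ => (1:ℝ)) t ≤ 1 := by
    intro t; by_cases h : t ∈ Ω <;> simp [h]
  have hgc : Continuous g := by
    apply continuous_const.mul
    exact Real.continuous_exp.comp (by continuity)
  have hrmeas : Measurable r := by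
    exact ((hindR.comp measurable_fst).mul (hindR.comp measurable_snd)).mul
      (hgc.measurable.comp (measurable_snd.sub measurable_fst))
  have hr0 : ∀ z, 0 ≤ r z := by
    intro z
    exact mul_nonneg (mul_nonneg (hindR0 _) (hindR0 _)) (hg0 _)
  have hlint : (∫⁻ z : ℝ × ℝ, ENNReal.ofReal (r z) ∂(volume.prod volume)) ≤
      ENNReal.ofReal (2 * Real.pi * (volume Ω).toReal) := by
    rw [lintegral_prod _ (hrmeas.ennreal_ofReal.aemeasurable)]
    have hinner : ∀ t : ℝ, (∫⁻ s : ℝ, ENNReal.ofReal (r (t, s))) ≤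
        Ω.indicator (fun _ => (1:ℝ≥0∞)) t * ENNReal.ofReal (2 * Real.pi) := by
      intro t
      by_cases ht : t ∈ Ω
      · rw [Set.indicator_of_mem ht, one_mul]
        calc (∫⁻ s : ℝ, ENNReal.ofReal (r (t, s)))
            ≤ ∫⁻ s : ℝ, ENNReal.ofReal (g (s - t)) := by
              apply lintegral_mono
              intro s
              apply ENNReal.ofReal_le_ofReal
              rw [hr]
              simp only
              rw [Set.indicator_of_mem ht, one_mul]
              exact mul_le_of_le_one_left (hg0 _) (hindR1 s)
          _ = ENNReal.ofReal (∫ s : ℝ, g (s - t)) := by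
              rw [ofReal_integral_eq_lintegral_ofReal ((gauss_integrable hb).comp_sub_right t)
                (Filter.Eventually.of_forall (fun s => hg0 _))]
          _ = ENNReal.ofReal (2 * Real.pi) := by
              rw [integral_sub_right_eq_self g t, gauss_val hb]
      · have : ∀ s : ℝ, r (t, s) = 0 := by
          intro s
          rw [hr]
          simp [Set.indicator_of_notMem ht]
        simp [this]
    calc (∫⁻ t : ℝ, ∫⁻ s : ℝ, ENNReal.ofReal (r (t, s)))
        ≤ ∫⁻ t : ℝ, Ω.indicator (fun _ => (1:ℝ≥0∞)) t * ENNReal.ofReal (2 * Real.pi) :=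
          lintegral_mono hinner
      _ = (volume Ω) * ENNReal.ofReal (2 * Real.pi) := by
          rw [lintegral_mul_const _ (measurable_const.indicator hmeas)]
          congr 1
          exact lintegral_indicator_one hmeas
      _ = ENNReal.ofReal (2 * Real.pi * (volume Ω).toReal) := by
          rw [mul_comm (2 * Real.pi), ENNReal.ofReal_mul ENNReal.toReal_nonneg,
            ENNReal.ofReal_toReal hfin.ne]
  calc (∫ z : ℝ × ℝ, r z ∂(volume.prod volume))
      = (∫⁻ z : ℝ × ℝ, ENNReal.ofReal (r z) ∂(volume.prod volume)).toReal := by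
        rw [integral_eq_lintegral_of_nonneg_ae (Filter.Eventually.of_forall hr0)
          hrmeas.aestronglyMeasurable]
    _ ≤ (ENNReal.ofReal (2 * Real.pi * (volume Ω).toReal)).toReal :=
        ENNReal.toReal_mono ENNReal.ofReal_ne_top hlint
    _ = 2 * Real.pi * (volume Ω).toReal := ENNReal.toReal_ofReal (by positivity)

end Stmt12Aux
namespace Stmt12Aux
open Complex Set
variable {Ω : Set ℝ}

lemma weighted_integrable (hmeas : MeasurableSet Ω) (hfin : volume Ω < ⊤) {b : ℝ} (hb : 0 < b) :
    Integrable (fun x : ℝ => Real.exp (-b * x ^ 2) * ‖Hf Ω x‖ ^ 2) := by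
  apply Integrable.mono' ((integrable_exp_neg_mul_sq hb).mul_const ((volume Ω).toReal ^ 2))
  · exact ((Real.continuous_exp.comp (by continuity)).mul
      ((Hf_continuous hmeas hfin).norm.pow 2)).aestronglyMeasurable
  · filter_upwards with x
    rw [Real.norm_eq_abs, _root_.abs_of_nonneg (by positivity)]
    exact mul_le_mul_of_nonneg_left
      (pow_le_pow_left₀ (norm_nonneg _) (Hf_norm_le hmeas x) 2) (Real.exp_pos _).le

lemma lint_Hf_le (hmeas : MeasurableSet Ω) (hfin : volume Ω < ⊤) :
    ∫⁻ x : ℝ, ENNReal.ofReal (‖Hf Ω x‖ ^ 2) ≤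
      ENNReal.ofReal (2 * Real.pi * (volume Ω).toReal) := by
  set fn : ℕ → ℝ → ℝ≥0∞ := fun n x =>
    ENNReal.ofReal (Real.exp (-(1/((n:ℝ)+1)) * x ^ 2) * ‖Hf Ω x‖ ^ 2) with hfn
  have hb : ∀ n : ℕ, (0:ℝ) < 1/((n:ℝ)+1) := fun n => by positivity
  have hHm : Measurable fun x => ‖Hf Ω x‖ ^ 2 :=
    ((Hf_continuous hmeas hfin).norm.pow 2).measurable
  have hfnm : ∀ n, AEMeasurable (fn n) volume := by
    intro n
    exact (((Real.measurable_exp.comp ((measurable_id.pow_const 2).const_mul _)).mul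
      hHm).ennreal_ofReal).aemeasurable
  have hmono : ∀ᵐ x : ℝ, Monotone fun n => fn n x := by
    filter_upwards with x
    intro n m hnm
    apply ENNReal.ofReal_le_ofReal
    apply mul_le_mul_of_nonneg_right _ (by positivity)
    apply Real.exp_le_exp.2
    rw [neg_mul, neg_mul, neg_le_neg_iff]
    apply mul_le_mul_of_nonneg_right _ (sq_nonneg x)
    apply one_div_le_one_div_of_le (by positivity)
    have : (n:ℝ) ≤ (m:ℝ) := Nat.cast_le.2 hnm
    linarith
  have htend : ∀ᵐ x : ℝ, Tendsto (fun n => fn n x) atTop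
      (nhds (ENNReal.ofReal (‖Hf Ω x‖ ^ 2))) := by
    filter_upwards with x
    have h1 : Tendsto (fun n : ℕ => -(1/((n:ℝ)+1)) * x ^ 2) atTop (nhds 0) := by
      have := (tendsto_one_div_add_atTop_nhds_zero_nat).neg.mul_const (x ^ 2)
      simpa using this
    have h2 : Tendsto (fun n : ℕ => Real.exp (-(1/((n:ℝ)+1)) * x ^ 2) * ‖Hf Ω x‖ ^ 2)
        atTop (nhds (‖Hf Ω x‖ ^ 2)) := by
      have := ((Real.continuous_exp.tendsto 0).comp h1).mul_const (‖Hf Ω x‖ ^ 2)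
      simpa using this
    exact (ENNReal.continuous_ofReal.tendsto _).comp h2
  have hlim := lintegral_tendsto_of_tendsto_of_monotone hfnm hmono htend
  apply le_of_tendsto hlim
  filter_upwards with n
  rw [hfn]
  rw [← ofReal_integral_eq_lintegral_ofReal (weighted_integrable hmeas hfin (hb n))
    (Filter.Eventually.of_forall (fun x => by positivity))]
  exact ENNReal.ofReal_le_ofReal (key hmeas hfin (hb n))

lemma Hf_sq_integrable (hmeas : MeasurableSet Ω) (hfin : volume Ω < ⊤) :
    Integrable (fun x : ℝ => ‖Hf Ω x‖ ^ 2) := by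
  refine ⟨((Hf_continuous hmeas hfin).norm.pow 2).aestronglyMeasurable, ?_⟩
  rw [hasFiniteIntegral_iff_norm]
  have : ∀ x : ℝ, ENNReal.ofReal ‖‖Hf Ω x‖ ^ 2‖ = ENNReal.ofReal (‖Hf Ω x‖ ^ 2) := by
    intro x; rw [Real.norm_eq_abs, _root_.abs_of_nonneg (by positivity)]
  simp only [this]
  exact lt_of_le_of_lt (lint_Hf_le hmeas hfin) ENNReal.ofReal_lt_top

lemma Hf_sq_integral_le (hmeas : MeasurableSet Ω) (hfin : volume Ω < ⊤) :
    ∫ x : ℝ, ‖Hf Ω x‖ ^ 2 ≤ 2 * Real.pi * (volume Ω).toReal := by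
  rw [integral_eq_lintegral_of_nonneg_ae (f := fun x => ‖Hf Ω x‖ ^ 2)
    (Filter.Eventually.of_forall (fun x => by positivity))
    (((Hf_continuous hmeas hfin).norm.pow 2).aestronglyMeasurable :
      AEStronglyMeasurable (fun x => ‖Hf Ω x‖ ^ 2) volume)]
  calc (∫⁻ x : ℝ, ENNReal.ofReal (‖Hf Ω x‖ ^ 2)).toReal
      ≤ (ENNReal.ofReal (2 * Real.pi * (volume Ω).toReal)).toReal :=
        ENNReal.toReal_mono ENNReal.ofReal_ne_top (lint_Hf_le hmeas hfin)
    _ = 2 * Real.pi * (volume Ω).toReal := ENNReal.toReal_ofReal (by positivity)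

end Stmt12Aux

open Stmt12Aux Set Complex in
/-- Lemma 6 (i): if the sampling upper bound
`∑_{λ ∈ Λ} |f λ|² ≤ C |Ω| ‖f‖²` holds on `PW_Ω`, then there is `η > 0`,
depending only on `Ω`, with `#(Λ ∩ I) ≤ 9C` for every interval `I` of length `η`. -/
theorem stmt12 (Ω : Set ℝ) (hmeas : MeasurableSet Ω) (hpos : 0 < volume Ω)
    (hfin : volume Ω < ⊤) (C : ℝ) (hC : 0 < C) (Λ : Set ℝ)
    (hyp : ∀ f : ℝ → ℂ, IsPW Ω f →
      ∑' l : ↥Λ, (‖f (l : ℝ)‖₊ ^ 2 : ℝ≥0∞) ≤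
        ENNReal.ofReal (C * (volume Ω).toReal * ∫ x : ℝ, ‖f x‖ ^ 2)) :
    ∃ η : ℝ, 0 < η ∧ ∀ a : ℝ,
      (Λ ∩ Set.Icc a (a + η)).encard ≤ ENNReal.ofReal (9 * C) := by
  classical
  set V := (volume Ω).toReal with hV
  have hVpos : 0 < V := ENNReal.toReal_pos hpos.ne' hfin.ne
  set h : ℝ → ℂ := fun x => (Real.sqrt (2 * Real.pi) : ℂ)⁻¹ * Hf Ω x with hh
  have h2pi : (0:ℝ) < 2 * Real.pi := by positivity
  have hsq : 0 < Real.sqrt (2 * Real.pi) := Real.sqrt_pos.2 h2pi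
  have hnorm_h : ∀ x, ‖h x‖ = (Real.sqrt (2 * Real.pi))⁻¹ * ‖Hf Ω x‖ := by
    intro x
    rw [hh]
    simp only [norm_mul, norm_inv, Complex.norm_real, Real.norm_eq_abs,
      _root_.abs_of_nonneg hsq.le]
  have h0 : ‖h 0‖ = (Real.sqrt (2 * Real.pi))⁻¹ * V := by
    rw [hnorm_h, Hf_zero hmeas, Complex.norm_real, Real.norm_eq_abs,
      _root_.abs_of_nonneg (ENNReal.toReal_nonneg)]
  have hsqlt : Real.sqrt (2 * Real.pi) < 3 := by
    rw [Real.sqrt_lt' (by norm_num)]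
    nlinarith [Real.pi_lt_d2]
  have hthr : V / 3 < ‖h 0‖ := by
    rw [h0, inv_mul_eq_div]
    exact div_lt_div_of_pos_left hVpos hsq hsqlt
  have hcont : Continuous fun x => ‖h x‖ :=
    (continuous_const.mul (Hf_continuous hmeas hfin)).norm
  have hopen : IsOpen {x : ℝ | V / 3 < ‖h x‖} := isOpen_lt continuous_const hcont
  obtain ⟨ε, hε, hball⟩ := Metric.isOpen_iff.1 hopen 0 hthr
  refine ⟨ε / 2, by positivity, fun a => ?_⟩
  -- the test function
  set f : ℝ → ℂ := fun x => h (x - a) with hf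
  have hPW : IsPW Ω f := by
    refine ⟨fun t => Complex.exp (Complex.I * t * a) * ind Ω t, ?_, ?_, ?_, ?_⟩
    · have hmem : MemLp (ind Ω) 2 volume := by
        rw [ind, show (1 : ℝ → ℂ) = fun _ => (1:ℂ) from rfl]
        exact memLp_indicator_const 2 hmeas (1:ℂ) (Or.inr hfin.ne)
      refine hmem.of_le ?_ ?_
      · exact ((meas_phase_pos a).mul (measurable_ind hmeas)).aestronglyMeasurable
      · filter_upwards with t
        rw [norm_mul, norm_exp_pos', one_mul]
    · intro t ht
      simp [ind, Set.indicator_of_notMem ht]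
    · apply Integrable.mono' (ind_integrable hmeas hfin).norm
      · exact ((meas_phase_pos a).mul (measurable_ind hmeas)).aestronglyMeasurable
      · filter_upwards with t
        rw [norm_mul, norm_exp_pos', one_mul]
    · intro x
      rw [hf, hh, FT]
      simp only
      congr 1
      rw [Hf]
      congr 1
      funext t
      have he : -(Complex.I * (t:ℂ) * ((x - a : ℝ):ℂ)) =
          -(Complex.I * (t:ℂ) * (x:ℂ)) + Complex.I * (t:ℂ) * (a:ℂ) := by
        push_cast; ring
      rw [← mul_assoc, ← Complex.exp_add, he]
  -- integral bound
  have hpt : ∀ x : ℝ, ‖f x‖ ^ 2 = (2 * Real.pi)⁻¹ * ‖Hf Ω (x - a)‖ ^ 2 := by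
    intro x
    rw [hf]
    simp only
    rw [hnorm_h, mul_pow, inv_pow, Real.sq_sqrt h2pi.le]
  have hIle : ∫ x : ℝ, ‖f x‖ ^ 2 ≤ V := by
    calc ∫ x : ℝ, ‖f x‖ ^ 2 = ∫ x : ℝ, (2 * Real.pi)⁻¹ * ‖Hf Ω (x - a)‖ ^ 2 := by
          simp only [hpt]
      _ = (2 * Real.pi)⁻¹ * ∫ x : ℝ, ‖Hf Ω (x - a)‖ ^ 2 := integral_const_mul _ _
      _ = (2 * Real.pi)⁻¹ * ∫ x : ℝ, ‖Hf Ω x‖ ^ 2 := by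
          rw [integral_sub_right_eq_self (fun x => ‖Hf Ω x‖ ^ 2) a]
      _ ≤ (2 * Real.pi)⁻¹ * (2 * Real.pi * V) := by
          apply mul_le_mul_of_nonneg_left (Hf_sq_integral_le hmeas hfin) (by positivity)
      _ = V := by field_simp
  have hRHS : (∑' l : ↥Λ, (‖f (l : ℝ)‖₊ ^ 2 : ℝ≥0∞)) ≤ ENNReal.ofReal (C * V * V) := by
    refine le_trans (hyp f hPW) (ENNReal.ofReal_le_ofReal ?_)
    exact mul_le_mul_of_nonneg_left hIle (by positivity)
  -- pointwise lower bound
  have hlow : ∀ x ∈ Set.Icc a (a + ε/2),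
      ENNReal.ofReal ((V/3) ^ 2) ≤ (‖f x‖₊ ^ 2 : ℝ≥0∞) := by
    intro x hx
    have hmem : x - a ∈ Metric.ball (0:ℝ) ε := by
      rw [Metric.mem_ball, Real.dist_eq, sub_zero,
        _root_.abs_of_nonneg (by linarith [hx.1] : (0:ℝ) ≤ x - a)]
      linarith [hx.2]
    have h2 : V / 3 < ‖h (x - a)‖ := hball hmem
    calc ENNReal.ofReal ((V/3) ^ 2) ≤ ENNReal.ofReal (‖f x‖ ^ 2) := by
          apply ENNReal.ofReal_le_ofReal
          apply pow_le_pow_left₀ (by positivity) _ 2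
          rw [hf]
          exact h2.le
      _ = (‖f x‖₊ ^ 2 : ℝ≥0∞) := by
          rw [ENNReal.ofReal_pow (norm_nonneg _), ofReal_norm, enorm_eq_nnnorm]
  -- finset counting bound
  have hfinset : ∀ T : Finset ℝ, ↑T ⊆ Λ ∩ Set.Icc a (a + ε/2) →
      (T.card : ℝ≥0∞) ≤ ENNReal.ofReal (9 * C) := by
    intro T hT
    have hsub : ∀ x ∈ T, x ∈ Λ := fun x hx => (hT hx).1
    set T' : Finset ↥Λ := T.attach.map
      ⟨fun x => ⟨x.1, hsub x.1 x.2⟩, fun u v huv => Subtype.ext (by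
        simpa using congrArg Subtype.val huv)⟩ with hT'
    have hcard : T'.card = T.card := by simp [hT']
    have h1 : (T.card : ℝ≥0∞) * ENNReal.ofReal ((V/3) ^ 2) ≤
        ∑ l ∈ T', (‖f (l : ℝ)‖₊ ^ 2 : ℝ≥0∞) := by
      have := Finset.card_nsmul_le_sum T' (fun l => (‖f (l : ℝ)‖₊ ^ 2 : ℝ≥0∞))
        (ENNReal.ofReal ((V/3) ^ 2)) (fun l hl => by
          apply hlow
          rw [hT'] at hl
          simp only [Finset.mem_map, Finset.mem_attach, Function.Embedding.coeFn_mk,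
            true_and] at hl
          obtain ⟨x, hx⟩ := hl
          have : (l : ℝ) ∈ T := by rw [← hx]; exact x.2
          exact (hT this).2)
      rwa [hcard, nsmul_eq_mul] at this
    have h2 : ∑ l ∈ T', (‖f (l : ℝ)‖₊ ^ 2 : ℝ≥0∞) ≤ ∑' l : ↥Λ, (‖f (l : ℝ)‖₊ ^ 2 : ℝ≥0∞) :=
      ENNReal.sum_le_tsum T'
    have h3 : (T.card : ℝ≥0∞) * ENNReal.ofReal ((V/3) ^ 2) ≤ ENNReal.ofReal (C * V * V) :=
      le_trans h1 (le_trans h2 hRHS)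
    have hq : (0:ℝ) < (V/3) ^ 2 := by positivity
    rw [← ENNReal.le_div_iff_mul_le (Or.inl (ENNReal.ofReal_pos.2 hq).ne')
      (Or.inl ENNReal.ofReal_ne_top)] at h3
    calc (T.card : ℝ≥0∞) ≤ ENNReal.ofReal (C * V * V) / ENNReal.ofReal ((V/3) ^ 2) := h3
      _ = ENNReal.ofReal ((C * V * V) / ((V/3) ^ 2)) := (ENNReal.ofReal_div_of_pos hq).symm
      _ = ENNReal.ofReal (9 * C) := by
          congr 1
          field_simp
          ring
  by_cases hfin' : (Λ ∩ Set.Icc a (a + ε/2)).Finite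
  · have hb := hfinset hfin'.toFinset (by simp)
    rw [hfin'.encard_eq_coe_toFinset_card]
    simpa using hb
  · exfalso
    have hinf : (Λ ∩ Set.Icc a (a + ε/2)).Infinite := hfin'
    obtain ⟨T, hTs, hTcard⟩ := hinf.exists_subset_card_eq (⌊9 * C⌋₊ + 1)
    have hb := hfinset T hTs
    rw [hTcard] at hb
    have : ((⌊9 * C⌋₊ + 1 : ℕ) : ℝ) ≤ 9 * C := by
      have h9C : (0:ℝ) ≤ 9 * C := by positivity
      rw [← ENNReal.ofReal_natCast] at hb
      exact_mod_cast (ENNReal.ofReal_le_ofReal_iff h9C).1 hb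
    have := lt_of_lt_of_le (Nat.lt_floor_add_one (9 * C)) (by exact_mod_cast this)
    exact lt_irrefl _ this
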